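/- Let A be an n×n complex Hermitian positive definite matrix and b ∈ ℂⁿ. Suppose w ∈ ℂⁿ is nonzero, λ is a nonzero scalar, and the generalized eigenvalue equation −b(b†w) = λ A w holds (i.e. −b b† w = λ A w). Then b†w ≠ 0, and the vector φ := −λ w / (b†w) satisfies the linear system A φ = b. -/

import Mathlib

open scoped Matrix ComplexOrder

/-- Let `A` be an `n × n` complex Hermitian positive definite matrix
and `b ∈ ℂⁿ`. Suppose `w ∈ ℂⁿ` is nonzero, `lam` is a nonzero scalar, and the
generalized eigenvalue equation `-b (b†w) = lam • A w` holds (i.e. `-b b† w = lam A w`).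
Then `b†w ≠ 0`, and the vector `φ := (-lam / (b†w)) • w` satisfies the linear system
`A φ = b`. -/
theorem gevp_ground_state_solves_linear_system {n : ℕ}
    (A : Matrix (Fin n) (Fin n) ℂ) (hA : A.IsHermitian) (hApd : A.PosDef)
    (b w : Fin n → ℂ) (hw : w ≠ 0) (lam : ℂ) (hlam : lam ≠ 0)
    (heq : (-(star b ⬝ᵥ w)) • b = lam • A.mulVec w) :
    star b ⬝ᵥ w ≠ 0 ∧ A.mulVec ((-lam / (star b ⬝ᵥ w)) • w) = b := by
  have hc : star b ⬝ᵥ w ≠ 0 := by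
    intro h
    have h0 : lam • A.mulVec w = 0 := by rw [← heq, h]; simp
    have hAw : A.mulVec w = 0 := by
      rcases smul_eq_zero.mp h0 with h | h
      · exact absurd h hlam
      · exact h
    have h2 := hApd.dotProduct_mulVec_pos hw
    rw [hAw, dotProduct_zero] at h2
    exact absurd h2 (lt_irrefl 0)
  refine ⟨hc, ?_⟩
  rw [Matrix.mulVec_smul]
  have hAw : lam • A.mulVec w = (-(star b ⬝ᵥ w)) • b := heq.symm
  have : A.mulVec w = (lam⁻¹ * (-(star b ⬝ᵥ w))) • b := by
    rw [mul_smul, ← hAw, inv_smul_smul₀ hlam]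
  rw [this, smul_smul]
  have hscal : -lam / (star b ⬝ᵥ w) * (lam⁻¹ * -(star b ⬝ᵥ w)) = 1 := by
    field_simp
  rw [hscal, one_smul]
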